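/- Let m ≥ 1, 1 ≤ p < ∞, let Ω ⊂ ℝ^m be open, let φ be a mollifier on B^m_1, and let ψ ∈ C^∞(Ω) be a nonnegative function with ‖Dψ‖_{L^∞(Ω)} < 1. Let ω ⊂ { x ∈ Ω : dist(x, ∂Ω) ≥ ψ(x) } be measurable. Then for every u ∈ L^p(Ω; ℝ^ν), the map x ↦ φ_ψ ∗ u(x) is well defined on ω and ‖φ_ψ ∗ u‖_{L^p(ω)} ≤ (1 − ‖Dψ‖_{L^∞(Ω)})^{−1/p} ‖u‖_{L^p(Ω)}. -/

import Mathlib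

open MeasureTheory Set Metric
open scoped ENNReal
noncomputable section

/-- `ℝ^m` with the Euclidean norm. -/
abbrev Eucl (n : ℕ) : Type := EuclideanSpace ℝ (Fin n)

/-- `φ` is a mollifier: a smooth nonnegative radial function, compactly supported in the open
unit ball `B^m_1`, with integral `1`. -/
def IsMollifier (m : ℕ) (φ : Eucl m → ℝ) : Prop :=
  ContDiff ℝ (⊤ : ℕ∞) φ ∧ HasCompactSupport φ ∧ tsupport φ ⊆ Metric.ball 0 1 ∧
    (∀ x, 0 ≤ φ x) ∧ (∀ x y : Eucl m, ‖x‖ = ‖y‖ → φ x = φ y) ∧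
    (∫ x in Metric.ball (0 : Eucl m) 1, φ x) = 1

/-- A preconnected set meeting both a set and its complement meets the frontier. -/
lemma IsPreconnected.nonempty_inter_frontier {α : Type*} [TopologicalSpace α]
    {s t : Set α} (hs : IsPreconnected s) (h1 : (s ∩ t).Nonempty)
    (h2 : (s \ t).Nonempty) : (s ∩ frontier t).Nonempty := by
  have := isPreconnected_closed_iff.1 hs (closure t) (closure tᶜ)
    isClosed_closure isClosed_closure
    (by intro x _; rcases em (x ∈ t) with h | h
        · exact Or.inl (subset_closure h)
        · exact Or.inr (subset_closure h))
    (h1.mono (inter_subset_inter_right _ subset_closure))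
    (h2.mono (fun x hx => ⟨hx.1, subset_closure hx.2⟩))
  rcases this with ⟨x, hxs, hx⟩
  exact ⟨x, hxs, by rw [frontier_eq_closure_inter_closure]; exact hx⟩

lemma ball_subset_of_le_infEdist {m : ℕ} {Ω : Set (Eucl m)} {x : Eucl m} {r : ℝ}
    (hx : x ∈ Ω) (h : ENNReal.ofReal r ≤ EMetric.infEdist x (frontier Ω)) :
    Metric.ball x r ⊆ Ω := by
  intro y hy
  by_contra hyΩ
  have hseg : IsPreconnected (segment ℝ x y) := (convex_segment x y).isPreconnected
  obtain ⟨w, hwseg, hwf⟩ := hseg.nonempty_inter_frontier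
    ⟨x, left_mem_segment ℝ x y, hx⟩ ⟨y, right_mem_segment ℝ x y, hyΩ⟩
  obtain ⟨a, b, ha, hb, hab, rfl⟩ := hwseg
  have hdist : dist x (a • x + b • y) ≤ dist x y := by
    have : x - (a • x + b • y) = b • (x - y) := by
      rw [smul_sub]
      have : a • x = x - b • x := by
        rw [eq_sub_iff_add_eq, ← add_smul, hab, one_smul]
      rw [this]; abel
    rw [dist_eq_norm, dist_eq_norm, this, norm_smul]
    calc ‖b‖ * ‖x - y‖ ≤ 1 * ‖x - y‖ := by
          apply mul_le_mul_of_nonneg_right _ (norm_nonneg _)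
          rw [Real.norm_of_nonneg hb]; linarith
      _ = ‖x - y‖ := one_mul _
  have h1 : EMetric.infEdist x (frontier Ω) ≤ edist x (a • x + b • y) :=
    EMetric.infEdist_le_edist_of_mem hwf
  have h2 : edist x (a • x + b • y) ≤ edist x y := by
    rw [edist_dist, edist_dist]; exact ENNReal.ofReal_le_ofReal hdist
  have h3 : edist x y < ENNReal.ofReal r := by
    rw [edist_dist]
    exact ENNReal.ofReal_lt_ofReal_iff_of_nonneg dist_nonneg |>.2 (by rwa [dist_comm])
  exact absurd ((h1.trans h2).trans_lt (h3.trans_le h)) (lt_irrefl _)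

open scoped Classical in
/-- Measurability of the piecewise extension of a function continuous on an open set. -/
lemma measurable_piecewise_of_continuousOn {α : Type*} [TopologicalSpace α]
    [MeasurableSpace α] [OpensMeasurableSpace α]
    {Ω : Set α} (hΩ : IsOpen Ω) {ψ : α → ℝ} (hψ : ContinuousOn ψ Ω) :
    Measurable (fun x => if x ∈ Ω then ψ x else 0) := by
  apply measurable_of_isOpen
  intro U hU
  have hkey : (fun x => if x ∈ Ω then ψ x else 0) ⁻¹' U =
      (Ω ∩ ψ ⁻¹' U) ∪ (Ωᶜ ∩ (if (0:ℝ) ∈ U then univ else ∅)) := by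
    ext x
    by_cases hx : x ∈ Ω <;> by_cases h0 : (0:ℝ) ∈ U <;>
      simp [hx, h0, Set.mem_preimage]
  rw [hkey]
  apply MeasurableSet.union
  · exact (hψ.isOpen_inter_preimage hΩ hU).measurableSet
  · exact (hΩ.isClosed_compl.measurableSet).inter (by split <;> simp)

/-- Determinant of a rank-one update of the identity. -/
lemma det_id_add_smulRight {m : ℕ} (ℓ : Eucl m →L[ℝ] ℝ) (z : Eucl m) :
    (ContinuousLinearMap.id ℝ (Eucl m) + ℓ.smulRight z).det = 1 + ℓ z := by
  classical
  set b : Module.Basis (Fin m) ℝ (Eucl m) := (EuclideanSpace.basisFun (Fin m) ℝ).toBasis with hb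
  have hdet := LinearMap.det_toMatrix b
    (ContinuousLinearMap.id ℝ (Eucl m) + ℓ.smulRight z : Eucl m →L[ℝ] Eucl m).toLinearMap
  rw [ContinuousLinearMap.det, ← hdet]
  have hM : LinearMap.toMatrix b b
      (ContinuousLinearMap.id ℝ (Eucl m) + ℓ.smulRight z : Eucl m →L[ℝ] Eucl m).toLinearMap =
      1 + Matrix.replicateCol (Fin 1) (fun i => z i) * Matrix.replicateRow (Fin 1) (fun j => ℓ (b j)) := by
    ext i j
    rw [LinearMap.toMatrix_apply]
    simp only [ContinuousLinearMap.coe_coe, ContinuousLinearMap.add_apply,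
      ContinuousLinearMap.coe_id', id_eq, ContinuousLinearMap.smulRight_apply]
    rw [map_add, _root_.map_smul]
    have h1 : b.repr (b j) i = (1 : Matrix (Fin m) (Fin m) ℝ) i j := by
      rw [Module.Basis.repr_self]
      by_cases h : i = j <;> simp [h, Matrix.one_apply, Finsupp.single_apply, eq_comm]
    have h2 : b.repr z i = z i := rfl
    rw [Finsupp.add_apply, Finsupp.smul_apply, h2, Matrix.add_apply]
    rw [h1]
    simp [Matrix.mul_apply, Fin.sum_univ_one, mul_comm, smul_eq_mul]
  rw [hM]; refine (Matrix.det_one_add_replicateCol_mul_replicateRow (ι := Fin 1) _ _).trans ?_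
  congr 1
  have hz : ℓ z = ∑ j, b.repr z j • ℓ (b j) := by
    conv_lhs => rw [← b.sum_repr z]
    rw [map_sum]
    simp [_root_.map_smul]
  rw [hz]
  simp only [dotProduct, smul_eq_mul]
  exact Finset.sum_congr rfl fun j _ => mul_comm _ _

/-- Jensen's inequality for probability measures via Hölder. -/
lemma jensen_prob {α : Type*} [MeasurableSpace α] {μ : Measure α} [IsProbabilityMeasure μ]
    {p : ℝ} (hp : 1 ≤ p) {f : α → ℝ≥0∞} (hf : AEMeasurable f μ) :
    (∫⁻ a, f a ∂μ) ^ p ≤ ∫⁻ a, f a ^ p ∂μ := by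
  rcases eq_or_lt_of_le hp with h1 | h1
  · simp [← h1]
  · have hpq := Real.HolderConjugate.conjExponent h1
    have key := ENNReal.lintegral_mul_le_Lp_mul_Lq μ hpq hf
      (aemeasurable_const : AEMeasurable (fun _ => (1:ℝ≥0∞)) μ)
    simp only [Pi.mul_apply, mul_one, ENNReal.one_rpow, lintegral_const,
      measure_univ, one_mul, ENNReal.one_rpow, mul_one] at key
    have h0p : 0 ≤ p := le_trans zero_le_one hp
    calc (∫⁻ a, f a ∂μ) ^ p ≤ ((∫⁻ a, f a ^ p ∂μ) ^ (1/p)) ^ p :=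
          ENNReal.rpow_le_rpow key h0p
      _ = ∫⁻ a, f a ^ p ∂μ := by
          rw [← ENNReal.rpow_mul, one_div_mul_cancel (by linarith : p ≠ 0),
            ENNReal.rpow_one]

set_option maxHeartbeats 2000000 in
/-- **`L^p` bound for adaptive smoothing.** -/
theorem adaptive_smoothing_Lp_bound
    (m ν : ℕ) (hm : 1 ≤ m) (p : ℝ) (hp : 1 ≤ p)
    (Ω : Set (Eucl m)) (hΩ : IsOpen Ω)
    (φ : Eucl m → ℝ) (hφ : IsMollifier m φ)
    (ψ : Eucl m → ℝ) (hψs : ContDiffOn ℝ (⊤ : ℕ∞) ψ Ω) (hψ0 : ∀ x ∈ Ω, 0 ≤ ψ x)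
    (K : ℝ) (hK0 : 0 ≤ K) (hK1 : K < 1)
    (hDψ : ∀ x ∈ Ω, ‖fderivWithin ℝ ψ Ω x‖ ≤ K)
    (ω : Set (Eucl m)) (hωm : MeasurableSet ω)
    (hω : ω ⊆ {x ∈ Ω | ENNReal.ofReal (ψ x) ≤ EMetric.infEdist x (frontier Ω)})
    (u : Eucl m → Eucl ν) (hum : Measurable u)
    (hu : MemLp u (ENNReal.ofReal p) (volume.restrict Ω)) :
    (∀ x ∈ ω, IntegrableOn (fun z => φ z • u (x + ψ x • z)) (Metric.ball 0 1) volume) ∧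
    eLpNorm (fun x => ∫ z in Metric.ball (0 : Eucl m) 1, φ z • u (x + ψ x • z))
        (ENNReal.ofReal p) (volume.restrict ω)
      ≤ ENNReal.ofReal ((1 - K) ^ (-(1 / p))) *
          eLpNorm u (ENNReal.ofReal p) (volume.restrict Ω) := by
  classical
  obtain ⟨hφs, hφc, hφsupp, hφ0, hφrad, hφint⟩ := hφ
  have hp0 : 0 < p := by linarith
  have hq0 : (ENNReal.ofReal p) ≠ 0 := (ENNReal.ofReal_pos.2 hp0).ne'
  have hqt : (ENNReal.ofReal p) ≠ ⊤ := ENNReal.ofReal_ne_top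
  have hqtoReal : (ENNReal.ofReal p).toReal = p := ENNReal.toReal_ofReal hp0.le
  have hBm : MeasurableSet (Metric.ball (0 : Eucl m) 1) := measurableSet_ball
  -- ball inclusions
  have hballsub : ∀ x ∈ ω, Metric.ball x (ψ x) ⊆ Ω := fun x hx =>
    ball_subset_of_le_infEdist (hω hx).1 (hω hx).2
  have hmem : ∀ x ∈ ω, ∀ z ∈ Metric.ball (0 : Eucl m) 1, x + ψ x • z ∈ Ω := by
    intro x hx z hz
    rcases eq_or_lt_of_le (hψ0 x (hω hx).1) with h0 | h0
    · simpa [← h0] using (hω hx).1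
    · apply hballsub x hx
      rw [mem_ball, dist_eq_norm, add_sub_cancel_left, norm_smul,
        Real.norm_of_nonneg h0.le]
      have hz1 : ‖z‖ < 1 := mem_ball_zero_iff.1 hz
      nlinarith [norm_nonneg z]
  have hφcont : Continuous φ := hφs.continuous
  have hφI : IntegrableOn φ (Metric.ball (0 : Eucl m) 1) volume :=
    (hφcont.integrable_of_hasCompactSupport hφc).integrableOn
  -- Part 1: integrability
  have part1 : ∀ x ∈ ω,
      IntegrableOn (fun z => φ z • u (x + ψ x • z)) (Metric.ball 0 1) volume := by
    intro x hx
    have hxΩ : x ∈ Ω := (hω hx).1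
    rcases eq_or_lt_of_le (hψ0 x hxΩ) with h0 | h0
    · have heq : (fun z : Eucl m => φ z • u (x + ψ x • z)) = fun z => φ z • u x := by
        funext z; rw [← h0]; simp
      rw [heq]
      exact hφI.smul_const (u x)
    · set c := ψ x with hc
      set e : Eucl m → Eucl m := fun w => x + c • w with he
      have hA : ∀ w ∈ Metric.ball (0 : Eucl m) 1,
          HasFDerivWithinAt e (c • ContinuousLinearMap.id ℝ (Eucl m))
            (Metric.ball (0 : Eucl m) 1) w := by
        intro w _
        exact (((hasFDerivAt_id w).const_smul c).const_add x).hasFDerivWithinAt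
      have hinj : InjOn e (Metric.ball (0 : Eucl m) 1) := by
        intro a _ b _ hab
        have := add_left_cancel hab
        exact smul_right_injective (Eucl m) (ne_of_gt h0) this
      have hdetc : (c • ContinuousLinearMap.id ℝ (Eucl m)).det = c ^ m := by
        rw [ContinuousLinearMap.det]
        have : ((c • ContinuousLinearMap.id ℝ (Eucl m) : Eucl m →L[ℝ] Eucl m) :
            Eucl m →ₗ[ℝ] Eucl m) = c • LinearMap.id := by
          ext w; simp
        rw [this, LinearMap.det_smul, LinearMap.det_id, mul_one, finrank_euclideanSpace_fin]
      have himg : e '' Metric.ball (0 : Eucl m) 1 = Metric.ball x c := by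
        ext y
        constructor
        · rintro ⟨w, hw, rfl⟩
          rw [mem_ball, dist_eq_norm, he]
          simp only [add_sub_cancel_left, norm_smul, Real.norm_of_nonneg h0.le]
          have hw1 : ‖w‖ < 1 := mem_ball_zero_iff.1 hw
          nlinarith [norm_nonneg w]
        · intro hy
          refine ⟨c⁻¹ • (y - x), ?_, ?_⟩
          · rw [mem_ball_zero_iff, norm_smul, Real.norm_of_nonneg (inv_nonneg.2 h0.le)]
            rw [mem_ball, dist_eq_norm] at hy
            rw [inv_mul_lt_iff₀ h0, mul_one]
            exact hy
          · rw [he]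
            simp only [smul_smul, mul_inv_cancel₀ (ne_of_gt h0), one_smul]
            abel
      have huball : IntegrableOn u (Metric.ball x c) volume := by
        have hsub : Metric.ball x c ⊆ Ω := hballsub x hx
        have hmem' : MemLp u (ENNReal.ofReal p) (volume.restrict (Metric.ball x c)) := by
          have := hu.restrict (Metric.ball x c)
          rwa [Measure.restrict_restrict_of_subset hsub] at this
        haveI : IsFiniteMeasure (volume.restrict (Metric.ball x c)) :=
          ⟨by rw [Measure.restrict_apply_univ]; exact measure_ball_lt_top⟩
        refine hmem'.integrable ?_
        rw [← ENNReal.ofReal_one]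
        exact ENNReal.ofReal_le_ofReal hp
      have hiff := integrableOn_image_iff_integrableOn_abs_det_fderiv_smul volume hBm hA hinj u
      rw [himg] at hiff
      have h2 := hiff.1 huball
      have h3 : IntegrableOn (fun w => u (e w)) (Metric.ball (0 : Eucl m) 1) volume := by
        have h4 := h2.smul ((c ^ m)⁻¹)
        refine IntegrableOn.congr_fun h4 ?_ hBm
        intro w _
        show (c ^ m)⁻¹ • |(c • ContinuousLinearMap.id ℝ (Eucl m)).det| • u (e w) = u (e w)
        rw [hdetc, abs_of_pos (pow_pos h0 m), smul_smul, inv_mul_cancel₀ (by positivity),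
          one_smul]
      have hφmem : MemLp φ ⊤ (volume.restrict (Metric.ball (0 : Eucl m) 1)) := by
        obtain ⟨C, hC⟩ := hφc.exists_bound_of_continuous hφcont
        exact memLp_top_of_bound hφcont.aestronglyMeasurable.restrict C
          (Filter.Eventually.of_forall hC)
      exact h3.smul_of_top_right hφmem
  refine ⟨part1, ?_⟩
  -- Part 2
  set χ : Eucl m → ℝ := fun x => if x ∈ Ω then ψ x else 0 with hχdef
  have hχmeas : Measurable χ := measurable_piecewise_of_continuousOn hΩ hψs.continuousOn
  have hχeq : ∀ x ∈ Ω, χ x = ψ x := fun x hx => if_pos hx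
  set IΩ := ∫⁻ y in Ω, (‖u y‖₊ : ℝ≥0∞) ^ p with hIΩ
  set C := (ENNReal.ofReal (1 - K))⁻¹ with hC
  have h1K : (0:ℝ) < 1 - K := by linarith
  -- measurability of the composed map
  have hmap : Measurable (fun pr : Eucl m × Eucl m => pr.1 + χ pr.1 • pr.2) := by
    apply Measurable.add measurable_fst
    exact (continuous_smul.measurable).comp
      ((hχmeas.comp measurable_fst).prodMk measurable_snd)
  -- change of variables bound, for each z in the unit ball
  have hzbound : ∀ z ∈ Metric.ball (0 : Eucl m) 1,
      (∫⁻ x in ω, (‖u (x + χ x • z)‖₊ : ℝ≥0∞) ^ p) ≤ C * IΩ := by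
    intro z hz
    have hz1 : ‖z‖ < 1 := mem_ball_zero_iff.1 hz
    set g : Eucl m → Eucl m := fun x => x + χ x • z with hg
    set A : Eucl m → (Eucl m →L[ℝ] Eucl m) := fun x =>
      ContinuousLinearMap.id ℝ (Eucl m) + (fderivWithin ℝ ψ Ω x).smulRight z with hAdef
    have hg' : ∀ x ∈ ω, HasFDerivWithinAt g (A x) ω x := by
      intro x hx
      have hxΩ : x ∈ Ω := (hω hx).1
      have hdiff : DifferentiableAt ℝ ψ x :=
        (hψs.contDiffAt (hΩ.mem_nhds hxΩ)).differentiableAt (by simp)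
      have hfw : fderivWithin ℝ ψ Ω x = fderiv ℝ ψ x := fderivWithin_of_isOpen hΩ hxΩ
      have h1 : HasFDerivAt (fun y => y + ψ y • z) (A x) x := by
        rw [hAdef]
        simp only
        rw [hfw]
        exact (hasFDerivAt_id x).add (hdiff.hasFDerivAt.smul_const z)
      have h2 : HasFDerivAt g (A x) x := by
        apply h1.congr_of_eventuallyEq
        filter_upwards [hΩ.mem_nhds hxΩ] with y hy
        rw [hg]
        simp only
        rw [hχeq y hy]
      exact h2.hasFDerivWithinAt
    have hdetA : ∀ x ∈ ω, 1 - K ≤ (A x).det := by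
      intro x hx
      have hxΩ := (hω hx).1
      rw [hAdef]
      simp only
      rw [det_id_add_smulRight]
      have hb : |fderivWithin ℝ ψ Ω x z| ≤ K := by
        calc |fderivWithin ℝ ψ Ω x z| = ‖fderivWithin ℝ ψ Ω x z‖ := (Real.norm_eq_abs _).symm
          _ ≤ ‖fderivWithin ℝ ψ Ω x‖ * ‖z‖ := (fderivWithin ℝ ψ Ω x).le_opNorm z
          _ ≤ K * 1 := mul_le_mul (hDψ x hxΩ) hz1.le (norm_nonneg _) hK0
          _ = K := mul_one K
      linarith [(abs_le.1 hb).1]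
    have key : ∀ a b : Eucl m, a ∈ ω → b ∈ ω →
        a + ψ a • z = b + ψ b • z → ψ a < ψ b → False := by
      intro a b ha hb hab hlt
      have haΩ := (hω ha).1
      have hbΩ := (hω hb).1
      have hbpos : 0 < ψ b := lt_of_le_of_lt (hψ0 a haΩ) hlt
      have hab' : a - b = (ψ b - ψ a) • z := by
        rw [sub_smul, sub_eq_sub_iff_add_eq_add]
        exact hab.trans (add_comm b _)
      have hnorm : ‖a - b‖ = (ψ b - ψ a) * ‖z‖ := by
        rw [hab', norm_smul, Real.norm_of_nonneg (by linarith)]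
      have hball : Metric.ball b (ψ b) ⊆ Ω := hballsub b hb
      have hain : a ∈ Metric.ball b (ψ b) := by
        rw [mem_ball, dist_eq_norm, hnorm]
        nlinarith [norm_nonneg z, hψ0 a haΩ, hz1]
      have hmvt : ‖ψ a - ψ b‖ ≤ K * ‖a - b‖ := by
        apply Convex.norm_image_sub_le_of_norm_hasFDerivWithin_le
          (f' := fun w => fderivWithin ℝ ψ Ω w)
          (fun w hw => ((hψs.differentiableOn (by simp) w
            (hball hw)).hasFDerivWithinAt).mono hball)
          (fun w hw => hDψ w (hball hw)) (convex_ball b (ψ b)) (mem_ball_self hbpos) hain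
      rw [Real.norm_eq_abs, abs_sub_comm, abs_of_pos (by linarith), hnorm] at hmvt
      have e1 : K * ((ψ b - ψ a) * ‖z‖) ≤ K * (ψ b - ψ a) := by
        apply mul_le_mul_of_nonneg_left _ hK0
        nlinarith [norm_nonneg z, hz1]
      nlinarith
    have hginj : InjOn g ω := by
      intro a ha b hb hab
      rw [hg] at hab
      simp only at hab
      rw [hχeq a (hω ha).1, hχeq b (hω hb).1] at hab
      rcases lt_trichotomy (ψ a) (ψ b) with h | h | h
      · exact absurd (key a b ha hb hab h) not_false
      · rw [h] at hab
        exact add_right_cancel hab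
      · exact absurd (key b a hb ha hab.symm h) not_false
    have himg : g '' ω ⊆ Ω := by
      rintro _ ⟨x, hx, rfl⟩
      rw [hg]
      simp only
      rw [hχeq x (hω hx).1]
      exact hmem x hx z hz
    have hcov := lintegral_image_eq_lintegral_abs_det_fderiv_mul volume hωm hg' hginj
      (fun y => (‖u y‖₊ : ℝ≥0∞) ^ p)
    have step1 : ENNReal.ofReal (1 - K) * ∫⁻ x in ω, (‖u (g x)‖₊ : ℝ≥0∞) ^ p ≤
        ∫⁻ x in ω, ENNReal.ofReal |(A x).det| * (‖u (g x)‖₊ : ℝ≥0∞) ^ p := by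
      rw [← lintegral_const_mul' _ _ ENNReal.ofReal_ne_top]
      refine lintegral_mono_ae ?_
      filter_upwards [ae_restrict_mem hωm] with x hx
      refine mul_le_mul_left (ENNReal.ofReal_le_ofReal ?_) _
      exact le_trans (hdetA x hx) (le_abs_self _)
    have step2 : ENNReal.ofReal (1 - K) * ∫⁻ x in ω, (‖u (g x)‖₊ : ℝ≥0∞) ^ p ≤ IΩ := by
      refine step1.trans ?_
      rw [← hcov]
      exact lintegral_mono_set himg
    have hk0 : ENNReal.ofReal (1 - K) ≠ 0 := (ENNReal.ofReal_pos.2 h1K).ne'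
    calc (∫⁻ x in ω, (‖u (x + χ x • z)‖₊ : ℝ≥0∞) ^ p)
        = (ENNReal.ofReal (1 - K))⁻¹ *
          (ENNReal.ofReal (1 - K) * ∫⁻ x in ω, (‖u (g x)‖₊ : ℝ≥0∞) ^ p) := by
          rw [← mul_assoc, ENNReal.inv_mul_cancel hk0 ENNReal.ofReal_ne_top, one_mul]
      _ ≤ C * IΩ := by
          rw [hC]
          exact mul_le_mul_right step2 _
  -- probability measure given by the mollifier
  have hφone : (∫⁻ z in Metric.ball (0 : Eucl m) 1, ENNReal.ofReal (φ z)) = 1 := by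
    rw [← ofReal_integral_eq_lintegral_ofReal hφI
      (Filter.Eventually.of_forall fun z => hφ0 z), hφint, ENNReal.ofReal_one]
  haveI hprob : IsProbabilityMeasure
      ((volume.restrict (Metric.ball (0 : Eucl m) 1)).withDensity
        (fun z => ENNReal.ofReal (φ z))) := by
    constructor
    rw [withDensity_apply _ MeasurableSet.univ, Measure.restrict_univ]
    exact hφone
  have hφm : Measurable (fun z => ENNReal.ofReal (φ z)) :=
    ENNReal.measurable_ofReal.comp hφcont.measurable
  -- pointwise Jensen bound
  have hpt : ∀ x ∈ ω,
      ((‖∫ z in Metric.ball (0 : Eucl m) 1, φ z • u (x + χ x • z)‖₊ : ℝ≥0∞)) ^ p ≤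
      ∫⁻ z in Metric.ball (0 : Eucl m) 1,
        ENNReal.ofReal (φ z) * (‖u (x + χ x • z)‖₊ : ℝ≥0∞) ^ p := by
    intro x hx
    have hxΩ := (hω hx).1
    have hInt : IntegrableOn (fun z => φ z • u (x + χ x • z))
        (Metric.ball (0 : Eucl m) 1) volume := by
      have h := part1 x hx
      refine h.congr_fun ?_ hBm
      intro z _
      rw [hχeq x hxΩ]
    set f : Eucl m → ℝ≥0∞ := fun z => (‖u (x + χ x • z)‖₊ : ℝ≥0∞) with hfdef
    have hfmeas : Measurable f := by
      refine Measurable.enorm (f := fun z => u (x + χ x • z)) ?_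
      exact hum.comp ((continuous_const.add (continuous_id.const_smul (χ x))).measurable)
    have h1 : (‖∫ z in Metric.ball (0 : Eucl m) 1, φ z • u (x + χ x • z)‖₊ : ℝ≥0∞) ≤
        ∫⁻ z in Metric.ball (0 : Eucl m) 1, ENNReal.ofReal (φ z) * f z := by
      rw [← enorm_eq_nnnorm, ← ofReal_norm_eq_enorm]
      calc ENNReal.ofReal ‖∫ z in Metric.ball (0 : Eucl m) 1, φ z • u (x + χ x • z)‖
          ≤ ENNReal.ofReal (∫ z in Metric.ball (0 : Eucl m) 1, ‖φ z • u (x + χ x • z)‖) :=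
            ENNReal.ofReal_le_ofReal (norm_integral_le_integral_norm _)
        _ = ∫⁻ z in Metric.ball (0 : Eucl m) 1, ENNReal.ofReal ‖φ z • u (x + χ x • z)‖ :=
            ofReal_integral_eq_lintegral_ofReal hInt.norm
              (Filter.Eventually.of_forall fun z => norm_nonneg _)
        _ = ∫⁻ z in Metric.ball (0 : Eucl m) 1, ENNReal.ofReal (φ z) * f z := by
            apply lintegral_congr
            intro z
            rw [norm_smul, Real.norm_of_nonneg (hφ0 z), ENNReal.ofReal_mul (hφ0 z),
              hfdef, ofReal_norm_eq_enorm, enorm_eq_nnnorm]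
    have h2 : (∫⁻ z in Metric.ball (0 : Eucl m) 1, ENNReal.ofReal (φ z) * f z) =
        ∫⁻ z, f z ∂((volume.restrict (Metric.ball (0 : Eucl m) 1)).withDensity
          (fun z => ENNReal.ofReal (φ z))) := by
      rw [lintegral_withDensity_eq_lintegral_mul _ hφm hfmeas]
      rfl
    have h3 : (∫⁻ z, f z ^ p ∂((volume.restrict (Metric.ball (0 : Eucl m) 1)).withDensity
          (fun z => ENNReal.ofReal (φ z)))) =
        ∫⁻ z in Metric.ball (0 : Eucl m) 1, ENNReal.ofReal (φ z) * f z ^ p := by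
      rw [lintegral_withDensity_eq_lintegral_mul _ hφm (hfmeas.pow_const p)]
      rfl
    calc ((‖∫ z in Metric.ball (0 : Eucl m) 1, φ z • u (x + χ x • z)‖₊ : ℝ≥0∞)) ^ p
        ≤ (∫⁻ z, f z ∂((volume.restrict (Metric.ball (0 : Eucl m) 1)).withDensity
            (fun z => ENNReal.ofReal (φ z)))) ^ p :=
          ENNReal.rpow_le_rpow (h1.trans_eq h2) hp0.le
      _ ≤ ∫⁻ z, f z ^ p ∂((volume.restrict (Metric.ball (0 : Eucl m) 1)).withDensity
            (fun z => ENNReal.ofReal (φ z))) := jensen_prob hp hfmeas.aemeasurable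
      _ = ∫⁻ z in Metric.ball (0 : Eucl m) 1, ENNReal.ofReal (φ z) * f z ^ p := h3
  -- swap measurability
  have hswap : AEMeasurable (Function.uncurry fun (x z : Eucl m) =>
      ENNReal.ofReal (φ z) * (‖u (x + χ x • z)‖₊ : ℝ≥0∞) ^ p)
      ((volume.restrict ω).prod (volume.restrict (Metric.ball (0 : Eucl m) 1))) := by
    apply Measurable.aemeasurable
    apply Measurable.mul
    · exact hφm.comp measurable_snd
    · exact ((hum.comp hmap).enorm).pow_const p
  -- main chain
  have hFcongr : eLpNorm (fun x => ∫ z in Metric.ball (0 : Eucl m) 1, φ z • u (x + ψ x • z))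
      (ENNReal.ofReal p) (volume.restrict ω) =
      eLpNorm (fun x => ∫ z in Metric.ball (0 : Eucl m) 1, φ z • u (x + χ x • z))
      (ENNReal.ofReal p) (volume.restrict ω) := by
    apply eLpNorm_congr_ae
    filter_upwards [ae_restrict_mem hωm] with x hx
    rw [hχeq x (hω hx).1]
  have hmain : (∫⁻ x in ω,
      (‖∫ z in Metric.ball (0 : Eucl m) 1, φ z • u (x + χ x • z)‖₊ : ℝ≥0∞) ^ p) ≤ C * IΩ := by
    calc (∫⁻ x in ω,
        (‖∫ z in Metric.ball (0 : Eucl m) 1, φ z • u (x + χ x • z)‖₊ : ℝ≥0∞) ^ p)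
        ≤ ∫⁻ x in ω, ∫⁻ z in Metric.ball (0 : Eucl m) 1,
            ENNReal.ofReal (φ z) * (‖u (x + χ x • z)‖₊ : ℝ≥0∞) ^ p := by
          refine lintegral_mono_ae ?_
          filter_upwards [ae_restrict_mem hωm] with x hx using hpt x hx
      _ = ∫⁻ z in Metric.ball (0 : Eucl m) 1, ∫⁻ x in ω,
            ENNReal.ofReal (φ z) * (‖u (x + χ x • z)‖₊ : ℝ≥0∞) ^ p :=
          lintegral_lintegral_swap hswap
      _ ≤ ∫⁻ z in Metric.ball (0 : Eucl m) 1, ENNReal.ofReal (φ z) * (C * IΩ) := by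
          refine lintegral_mono_ae ?_
          filter_upwards [ae_restrict_mem hBm] with z hz
          rw [lintegral_const_mul' _ _ ENNReal.ofReal_ne_top]
          exact mul_le_mul_right (hzbound z hz) _
      _ = (∫⁻ z in Metric.ball (0 : Eucl m) 1, ENNReal.ofReal (φ z)) * (C * IΩ) :=
          lintegral_mul_const _ hφm
      _ = C * IΩ := by rw [hφone, one_mul]
  rw [hFcongr, eLpNorm_eq_lintegral_rpow_enorm_toReal hq0 hqt, hqtoReal]
  calc (∫⁻ x in ω,
      (‖∫ z in Metric.ball (0 : Eucl m) 1, φ z • u (x + χ x • z)‖₊ : ℝ≥0∞) ^ p) ^ (1/p)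
      ≤ (C * IΩ) ^ (1/p) := ENNReal.rpow_le_rpow hmain (by positivity)
    _ = C ^ (1/p) * IΩ ^ (1/p) := ENNReal.mul_rpow_of_nonneg _ _ (by positivity)
    _ = ENNReal.ofReal ((1 - K) ^ (-(1 / p))) *
        eLpNorm u (ENNReal.ofReal p) (volume.restrict Ω) := by
        rw [eLpNorm_eq_lintegral_rpow_enorm_toReal hq0 hqt, hqtoReal]
        congr 1
        rw [hC, ENNReal.inv_rpow, ← ENNReal.rpow_neg,
          ENNReal.ofReal_rpow_of_pos h1K]
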